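/- For the TRIP-Stern sequence for (e,e,e), the level sums satisfy the recurrence S(n) = 4·S(n−1) − 5·S(n−2) + 4·S(n−3) for all n ≥ 3, with initial values S(0) = 3, S(1) = 8, S(2) = 22. -/
import Mathlib


/-- `f₀(a,b,c) = (b,c,a+c)` for the triplet `(e,e,e)`. -/
def f0 (p : ℤ × ℤ × ℤ) : ℤ × ℤ × ℤ := (p.2.1, p.2.2, p.1 + p.2.2)

/-- `f₁(a,b,c) = (a,b,a+c)` for the triplet `(e,e,e)`. -/
def f1 (p : ℤ × ℤ × ℤ) : ℤ × ℤ × ℤ := (p.1, p.2.1, p.1 + p.2.2)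

/-- One step of the TRIP-Stern tree: apply `f₁` on a `true` and `f₀` on a `false`. -/
def step (p : ℤ × ℤ × ℤ) (i : Bool) : ℤ × ℤ × ℤ := if i then f1 p else f0 p

/-- `Δ(v) = f_{iₙ}(⋯ f_{i₁}(1,1,1) ⋯)`, applying `f_{i₁}` first. -/
def delta (v : List Bool) : ℤ × ℤ × ℤ := v.foldl step (1, 1, 1)

/-- `S n` is the sum of all three coordinates of all `2ⁿ` level-`n` triples. -/
def S (n : ℕ) : ℤ :=
  ∑ v : Fin n → Bool,
    ((delta (List.ofFn v)).1 + (delta (List.ofFn v)).2.1 + (delta (List.ofFn v)).2.2)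

def T (n : ℕ) : ℤ × ℤ × ℤ := ∑ v : Fin n → Bool, delta (List.ofFn v)

lemma delta_snoc (w : Fin n → Bool) (b : Bool) :
    delta (List.ofFn (Fin.snoc w b)) = step (delta (List.ofFn w)) b := by
  rw [List.ofFn_succ']
  simp [delta, List.concat_eq_append, Fin.snoc]

lemma T_succ (n : ℕ) : T (n + 1) =
    ((T n).1 + (T n).2.1, (T n).2.1 + (T n).2.2, 2 * (T n).1 + 2 * (T n).2.2) := by
  have := Fintype.sum_equiv (Fin.snocEquiv (fun _ : Fin (n+1) => Bool))
    (fun p : Bool × (Fin n → Bool) => delta (List.ofFn (Fin.snoc p.2 p.1)))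
    (fun v : Fin (n+1) → Bool => delta (List.ofFn v)) (fun p => rfl)
  rw [T, ← this, Fintype.sum_prod_type]
  simp only [delta_snoc]
  rw [Fintype.sum_bool]
  simp only [← Finset.sum_add_distrib]
  have h : ∀ w : Fin n → Bool, step (delta (List.ofFn w)) true + step (delta (List.ofFn w)) false
      = ((delta (List.ofFn w)).1 + (delta (List.ofFn w)).2.1,
         (delta (List.ofFn w)).2.1 + (delta (List.ofFn w)).2.2,
         2 * (delta (List.ofFn w)).1 + 2 * (delta (List.ofFn w)).2.2) := by
    intro w
    simp [step, f0, f1, Prod.ext_iff]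
    ring_nf
  simp only [h]
  simp [T, Prod.ext_iff, Finset.sum_add_distrib, Finset.mul_sum, Prod.fst_sum, Prod.snd_sum]

lemma S_eq (n : ℕ) : S n = (T n).1 + (T n).2.1 + (T n).2.2 := by
  simp [S, T, Prod.fst_sum, Prod.snd_sum, Finset.sum_add_distrib]

/-- For the TRIP-Stern sequence for `(e,e,e)`, the level sums satisfy
`S(n) = 4·S(n−1) − 5·S(n−2) + 4·S(n−3)` for all `n ≥ 3`, with `S(0) = 3`, `S(1) = 8`,
`S(2) = 22`. -/
theorem levelSum_recurrence_eee :
    S 0 = 3 ∧ S 1 = 8 ∧ S 2 = 22 ∧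
    (∀ n : ℕ, 3 ≤ n → S n = 4 * S (n - 1) - 5 * S (n - 2) + 4 * S (n - 3)) := by
  have hT0 : T 0 = (1, 1, 1) := by decide
  refine ⟨by rw [S_eq, hT0]; rfl, ?_, ?_, ?_⟩
  · rw [S_eq, T_succ, hT0]; rfl
  · rw [S_eq, T_succ, T_succ, hT0]; rfl
  · intro n hn
    obtain ⟨m, rfl⟩ : ∃ m, n = m + 3 := ⟨n - 3, by omega⟩
    simp only [Nat.add_sub_cancel, show m + 3 - 1 = m + 2 from rfl, show m + 3 - 2 = m + 1 from rfl]
    rw [S_eq (m+3), S_eq (m+2), S_eq (m+1), S_eq m, T_succ (m+2), T_succ (m+1), T_succ m]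
    ring
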